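/- Let A be a real symmetric d×d matrix and let m ≤ d. Then for every real symmetric positive semidefinite d×d matrix Z with rank(Z) ≤ m, one has ‖A − A⁺₍ₘ₎‖_F ≤ ‖A − Z‖_F; that is, A⁺₍ₘ₎ is a best rank-m positive semidefinite approximation of A in Frobenius norm. -/

import Mathlib

open Matrix

/-- Frobenius norm of a real matrix. -/
noncomputable def frobNorm {n m : ℕ} (M : Matrix (Fin n) (Fin m) ℝ) : ℝ :=
  Real.sqrt (∑ i, ∑ j, (M i j) ^ 2)

section Helpers

variable {d : ℕ}

private lemma sum_sq_eq_trace (M : Matrix (Fin d) (Fin d) ℝ) :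
    ∑ i, ∑ j, (M i j) ^ 2 = (Mᵀ * M).trace := by
  simp only [Matrix.trace, Matrix.diag, Matrix.mul_apply, Matrix.transpose_apply, sq]
  exact Finset.sum_comm

private lemma psd_diag_nonneg {M : Matrix (Fin d) (Fin d) ℝ} (hM : M.PosSemidef) (i : Fin d) :
    0 ≤ M i i := by
  exact hM.diag_nonneg

private lemma psd_trace_nonneg {M : Matrix (Fin d) (Fin d) ℝ} (hM : M.PosSemidef) :
    0 ≤ M.trace :=
  Finset.sum_nonneg fun i _ => psd_diag_nonneg hM i

private lemma trace_mul_psd_nonneg {X Y : Matrix (Fin d) (Fin d) ℝ} (hX : X.PosSemidef)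
    (hY : Y.PosSemidef) : 0 ≤ (X * Y).trace := by
  obtain ⟨B, rfl⟩ : ∃ B : Matrix (Fin d) (Fin d) ℝ, X = Bᴴ * B := by
    open MatrixOrder in exact CStarAlgebra.nonneg_iff_eq_star_mul_self.mp hX.nonneg
  rw [Matrix.mul_assoc, Matrix.trace_mul_comm]
  exact psd_trace_nonneg (hY.mul_mul_conjTranspose_same B)

private lemma conj_mul_conj {U : Matrix (Fin d) (Fin d) ℝ} (hU : Uᵀ * U = 1)
    (X Y : Matrix (Fin d) (Fin d) ℝ) :
    (U * X * Uᵀ) * (U * Y * Uᵀ) = U * (X * Y) * Uᵀ := by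
  have h : Uᵀ * (U * Y * Uᵀ) = Y * Uᵀ := by
    rw [← Matrix.mul_assoc, ← Matrix.mul_assoc, hU, Matrix.one_mul]
  rw [Matrix.mul_assoc (U * X), h, ← Matrix.mul_assoc, Matrix.mul_assoc U X]

private lemma trace_conj {U : Matrix (Fin d) (Fin d) ℝ} (hU : Uᵀ * U = 1)
    (X : Matrix (Fin d) (Fin d) ℝ) : (U * X * Uᵀ).trace = X.trace := by
  rw [Matrix.trace_mul_cycle, hU, Matrix.one_mul]

private lemma conj_diag_transpose (U : Matrix (Fin d) (Fin d) ℝ) (v : Fin d → ℝ) :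
    (U * Matrix.diagonal v * Uᵀ)ᵀ = U * Matrix.diagonal v * Uᵀ := by
  rw [Matrix.transpose_mul, Matrix.transpose_mul, Matrix.transpose_transpose,
    Matrix.diagonal_transpose, Matrix.mul_assoc]

private lemma trace_mul_diagonal (X : Matrix (Fin d) (Fin d) ℝ) (w : Fin d → ℝ) :
    (X * Matrix.diagonal w).trace = ∑ i, X i i * w i := by
  simp [Matrix.trace, Matrix.diag, Matrix.mul_apply, Matrix.diagonal]

private lemma conj_diag_psd (U : Matrix (Fin d) (Fin d) ℝ) {v : Fin d → ℝ}
    (hv : ∀ i, 0 ≤ v i) : (U * Matrix.diagonal v * Uᵀ).PosSemidef := by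
  have := (Matrix.posSemidef_diagonal_iff.mpr hv).mul_mul_conjTranspose_same U
  rwa [conjTranspose_eq_transpose_of_trivial] at this

private lemma sumsq_sub_expand {X Y : Matrix (Fin d) (Fin d) ℝ} (hX : Xᵀ = X) (hY : Yᵀ = Y) :
    ∑ i, ∑ j, ((X - Y) i j) ^ 2 = (X * X).trace - 2 * (X * Y).trace + (Y * Y).trace := by
  rw [sum_sq_eq_trace, Matrix.transpose_sub, hX, hY]
  have e : (X - Y) * (X - Y) = X * X - X * Y - Y * X + Y * Y := by noncomm_ring
  rw [e, Matrix.trace_add, Matrix.trace_sub, Matrix.trace_sub, Matrix.trace_mul_comm Y X]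
  ring

private lemma bathtub {m : ℕ} (w c : Fin d → ℝ) (hw : Antitone w) (hw0 : ∀ i, 0 ≤ w i)
    (hc0 : ∀ i, 0 ≤ c i) (hc1 : ∀ i, c i ≤ 1) (hcs : ∑ i, c i ≤ m) :
    ∑ i, w i * c i ≤ ∑ i : Fin d, (if (i : ℕ) < m then w i else 0) := by
  by_cases hmd : d ≤ m
  · have hall : ∀ i : Fin d, (i : ℕ) < m := fun i => lt_of_lt_of_le i.2 hmd
    simp only [hall, if_true]
    exact Finset.sum_le_sum fun i _ => by nlinarith [hc1 i, hw0 i, hc0 i]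
  · push_neg at hmd
    set t := w ⟨m, hmd⟩ with ht
    have htnn : 0 ≤ t := hw0 _
    have key : ∀ i : Fin d, w i * c i ≤
        (if (i : ℕ) < m then w i else 0) + (t * c i - (if (i : ℕ) < m then t else 0)) := by
      intro i
      by_cases h : (i : ℕ) < m
      · simp only [h, if_true]
        have hwt : t ≤ w i := hw (by simp [Fin.le_def]; omega)
        nlinarith [hc1 i]
      · simp only [h, if_false]
        have hwt : w i ≤ t := hw (by simp [Fin.le_def]; omega)
        nlinarith [hc0 i]
    have hind : ∑ i : Fin d, (if (i : ℕ) < m then t else 0) = m * t := by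
      rw [Fin.sum_univ_eq_sum_range (fun k => if k < m then t else 0), ← Finset.sum_filter]
      have h2 : Finset.filter (fun k => k < m) (Finset.range d) = Finset.range m := by
        ext k; simp; omega
      rw [h2, Finset.sum_const, Finset.card_range, nsmul_eq_mul]
    calc ∑ i, w i * c i
        ≤ ∑ i : Fin d, ((if (i : ℕ) < m then w i else 0)
            + (t * c i - (if (i : ℕ) < m then t else 0))) :=
          Finset.sum_le_sum fun i _ => key i
      _ = (∑ i : Fin d, (if (i : ℕ) < m then w i else 0))
            + (t * (∑ i, c i) - m * t) := by
          rw [Finset.sum_add_distrib, Finset.sum_sub_distrib, hind, Finset.mul_sum]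
      _ ≤ _ := by nlinarith

end Helpers

set_option maxHeartbeats 1600000 in
theorem posPart_rank_m_best_psd_approx
    (d m : ℕ) (hm : m ≤ d) (A : Matrix (Fin d) (Fin d) ℝ) (hA : A.IsSymm)
    (U : Matrix (Fin d) (Fin d) ℝ) (lam : Fin d → ℝ)
    (hU : Uᵀ * U = 1) (hlam : Antitone lam)
    (hdecomp : A = U * Matrix.diagonal lam * Uᵀ)
    (B : Matrix (Fin d) (Fin d) ℝ)
    (hB : B = U * Matrix.diagonal
      (fun i : Fin d => if (i : ℕ) < m then max (lam i) 0 else 0) * Uᵀ)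
    (Z : Matrix (Fin d) (Fin d) ℝ) (hZsymm : Z.IsSymm) (hZ : Z.PosSemidef)
    (hrank : Z.rank ≤ m) :
    frobNorm (A - B) ≤ frobNorm (A - Z) := by
  classical
  unfold frobNorm
  apply Real.sqrt_le_sqrt
  have hUU : U * Uᵀ = 1 := mul_eq_one_comm.mp hU
  -- the positive part of the eigenvalues
  have hν0 : ∀ i, (0 : ℝ) ≤ max (lam i) 0 := fun i => le_max_right _ _
  have hνanti : Antitone (fun i => max (lam i) 0) := fun i j h => max_le_max (hlam h) le_rfl
  -- abbreviations
  set ν : Fin d → ℝ := fun i => max (lam i) 0 with hνdef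
  set b : Fin d → ℝ := fun i => if (i : ℕ) < m then ν i else 0 with hbdef
  set Ap : Matrix (Fin d) (Fin d) ℝ := U * Matrix.diagonal ν * Uᵀ with hApdef
  have hApt : Apᵀ = Ap := conj_diag_transpose U ν
  have hZt : Zᵀ = Z := hZsymm.eq
  have hAt : Aᵀ = A := hA.eq
  -- spectral data of Z
  have hZH := hZ.1
  set V : Matrix (Fin d) (Fin d) ℝ := (hZH.eigenvectorUnitary : Matrix (Fin d) (Fin d) ℝ)
    with hVdef
  set μ : Fin d → ℝ := hZH.eigenvalues with hμdef
  have hspec : Z = V * Matrix.diagonal μ * Vᵀ := by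
    have := hZH.spectral_theorem
    simpa [hVdef, hμdef, Matrix.star_eq_conjTranspose, conjTranspose_eq_transpose_of_trivial] using this
  have hVtV : Vᵀ * V = 1 := by
    have h := Matrix.mem_unitaryGroup_iff'.mp hZH.eigenvectorUnitary.2
    rw [Matrix.star_eq_conjTranspose, conjTranspose_eq_transpose_of_trivial] at h
    exact h
  have hVVt : V * Vᵀ = 1 := mul_eq_one_comm.mp hVtV
  -- the projection onto the range of Z
  set χ : Fin d → ℝ := fun i => if μ i = 0 then 0 else 1 with hχdef
  set P : Matrix (Fin d) (Fin d) ℝ := V * Matrix.diagonal χ * Vᵀ with hPdef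
  have hχ0 : ∀ i, 0 ≤ χ i := fun i => by by_cases h : μ i = 0 <;> simp [hχdef, h]
  have hχ1 : ∀ i, χ i ≤ 1 := fun i => by by_cases h : μ i = 0 <;> simp [hχdef, h]
  have hPt : Pᵀ = P := conj_diag_transpose V χ
  have hPP : P * P = P := by
    rw [hPdef, conj_mul_conj hVtV, Matrix.diagonal_mul_diagonal]
    have h3 : (fun i => χ i * χ i) = χ := by
      funext i; by_cases h : μ i = 0 <;> simp [hχdef, h]
    rw [h3]
  have hPZ : P * Z = Z := by
    rw [hPdef, hspec, conj_mul_conj hVtV, Matrix.diagonal_mul_diagonal]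
    have h3 : (fun i => χ i * μ i) = μ := by
      funext i; by_cases h : μ i = 0 <;> simp [hχdef, h]
    rw [h3]
  have h1P : 1 - P = V * Matrix.diagonal (fun i => 1 - χ i) * Vᵀ := by
    have : Matrix.diagonal (fun i => 1 - χ i) = 1 - Matrix.diagonal χ := by
      rw [← Matrix.diagonal_one, Matrix.diagonal_sub]
    rw [this, Matrix.mul_sub, Matrix.sub_mul, Matrix.mul_one, hVVt, hPdef]
  have hP_psd : P.PosSemidef := conj_diag_psd V hχ0
  have h1P_psd : (1 - P).PosSemidef := by
    rw [h1P]; exact conj_diag_psd V fun i => by linarith [hχ1 i]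
  have h1Pmul : (1 - P) * (1 - P) = 1 - P := by
    rw [Matrix.sub_mul, Matrix.one_mul, Matrix.mul_sub, Matrix.mul_one, hPP]
    abel
  -- trace of P is the rank of Z
  have htrP : P.trace ≤ (m : ℝ) := by
    rw [hPdef, trace_conj hVtV, Matrix.trace_diagonal]
    have hcard : ∑ i, χ i = ((Finset.univ.filter (fun i => μ i ≠ 0)).card : ℝ) := by
      rw [Finset.card_filter]
      push_cast
      refine Finset.sum_congr rfl fun i _ => ?_
      by_cases h : μ i = 0 <;> simp [hχdef, h]
    rw [hcard]
    have hrk : (Finset.univ.filter (fun i => μ i ≠ 0)).card = Z.rank := by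
      rw [hZH.rank_eq_card_non_zero_eigs, Fintype.card_subtype]
    rw [hrk]
    exact_mod_cast hrank
  -- sums of squares on the left
  have hABdiag : A - B = U * Matrix.diagonal (fun i => lam i - b i) * Uᵀ := by
    rw [hdecomp, hB, ← Matrix.sub_mul, ← Matrix.mul_sub, ← Matrix.diagonal_sub]
  have hLHS : ∑ i, ∑ j, ((A - B) i j) ^ 2 = ∑ i, (lam i - b i) ^ 2 := by
    rw [hABdiag, sum_sq_eq_trace, conj_diag_transpose, conj_mul_conj hU,
      Matrix.diagonal_mul_diagonal, trace_conj hU, Matrix.trace_diagonal]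
    simp [sq]
  -- sums of squares on the right
  have hRHS : ∑ i, ∑ j, ((A - Z) i j) ^ 2
      = (A * A).trace - 2 * (A * Z).trace + (Z * Z).trace := sumsq_sub_expand hAt hZt
  have htrAA : (A * A).trace = ∑ i, (lam i) ^ 2 := by
    rw [hdecomp, conj_mul_conj hU, Matrix.diagonal_mul_diagonal, trace_conj hU,
      Matrix.trace_diagonal]
    simp [sq]
  have htrApAp : (Ap * Ap).trace = ∑ i, (ν i) ^ 2 := by
    rw [hApdef, conj_mul_conj hU, Matrix.diagonal_mul_diagonal, trace_conj hU,
      Matrix.trace_diagonal]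
    simp [sq]
  -- tr(A Z) ≤ tr(Ap Z)
  have hAZ_le : (A * Z).trace ≤ (Ap * Z).trace := by
    have hdiff : Ap - A = U * Matrix.diagonal (fun i => ν i - lam i) * Uᵀ := by
      rw [hApdef, hdecomp, ← Matrix.sub_mul, ← Matrix.mul_sub, ← Matrix.diagonal_sub]
    have hdpsd : (Ap - A).PosSemidef := by
      rw [hdiff]
      exact conj_diag_psd U fun i => by
        simp only [hνdef, sub_nonneg]; exact le_max_left _ _
    have h0 := trace_mul_psd_nonneg hdpsd hZ
    rw [Matrix.sub_mul, Matrix.trace_sub] at h0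
    linarith
  -- the key inequality via the projection P
  set M : Matrix (Fin d) (Fin d) ℝ := Ap - Z with hMdef
  have hMt : Mᵀ = M := by rw [hMdef, Matrix.transpose_sub, hApt, hZt]
  have e1 : (P * M)ᵀ * (P * M) = Mᵀ * (P * M) := by
    rw [Matrix.transpose_mul, hPt, Matrix.mul_assoc, ← Matrix.mul_assoc P P M, hPP]
  have h1Pt : (1 - P)ᵀ = 1 - P := by
    rw [Matrix.transpose_sub, hPt]
    congr 1
    exact Matrix.transpose_one
  have e2 : ((1 - P) * M)ᵀ * ((1 - P) * M) = Mᵀ * ((1 - P) * M) := by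
    rw [Matrix.transpose_mul, h1Pt,
      Matrix.mul_assoc, ← Matrix.mul_assoc (1 - P) (1 - P) M, h1Pmul]
  have pythag : (Mᵀ * M).trace
      = ((P * M)ᵀ * (P * M)).trace + (((1 - P) * M)ᵀ * ((1 - P) * M)).trace := by
    rw [e1, e2, ← Matrix.trace_add, ← Matrix.mul_add]
    have : P * M + (1 - P) * M = M := by
      rw [← Matrix.add_mul]; simp
    rw [this]
  have hPMnn : 0 ≤ ((P * M)ᵀ * (P * M)).trace := by
    rw [← sum_sq_eq_trace]
    exact Finset.sum_nonneg fun i _ => Finset.sum_nonneg fun j _ => sq_nonneg _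
  have h1PM : (1 - P) * M = (1 - P) * Ap := by
    rw [hMdef, Matrix.mul_sub]
    have : (1 - P) * Z = 0 := by
      rw [Matrix.sub_mul, Matrix.one_mul, hPZ, sub_self]
    rw [this, sub_zero]
  have step4 : (((1 - P) * Ap)ᵀ * ((1 - P) * Ap)).trace
      = (Ap * Ap).trace - (P * (Ap * Ap)).trace := by
    have e3 : ((1 - P) * Ap)ᵀ * ((1 - P) * Ap) = Apᵀ * ((1 - P) * Ap) := by
      rw [Matrix.transpose_mul, h1Pt,
        Matrix.mul_assoc, ← Matrix.mul_assoc (1 - P) (1 - P) Ap, h1Pmul]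
    rw [e3, hApt, Matrix.trace_mul_comm, Matrix.mul_assoc, Matrix.trace_mul_comm Ap,
      ← Matrix.mul_assoc (1 - P) Ap Ap, Matrix.sub_mul, Matrix.one_mul, Matrix.sub_mul,
      Matrix.trace_sub, Matrix.mul_assoc P Ap Ap]
  -- Ky Fan step
  have hApAp : Ap * Ap = U * Matrix.diagonal (fun i => ν i * ν i) * Uᵀ := by
    rw [hApdef, conj_mul_conj hU, Matrix.diagonal_mul_diagonal]
  have step5 : (P * (Ap * Ap)).trace ≤ ∑ i : Fin d, (if (i : ℕ) < m then ν i * ν i else 0) := by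
    have hPU : P * (U * Matrix.diagonal (fun i => ν i * ν i) * Uᵀ)
        = (P * U) * Matrix.diagonal (fun i => ν i * ν i) * Uᵀ := by
      simp only [Matrix.mul_assoc]
    have htr : (P * (Ap * Ap)).trace
        = ((Uᵀ * P * U) * Matrix.diagonal (fun i => ν i * ν i)).trace := by
      rw [hApAp, hPU, Matrix.trace_mul_cycle]
      simp only [Matrix.mul_assoc]
    rw [htr, trace_mul_diagonal]
    have hUPU_psd : (Uᵀ * P * U).PosSemidef := by
      have := hP_psd.conjTranspose_mul_mul_same U
      rwa [conjTranspose_eq_transpose_of_trivial] at this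
    have hc0 : ∀ i, 0 ≤ (Uᵀ * P * U) i i := fun i => psd_diag_nonneg hUPU_psd i
    have hc1 : ∀ i, (Uᵀ * P * U) i i ≤ 1 := by
      intro i
      have hpsd1 : (Uᵀ * (1 - P) * U).PosSemidef := by
        have := h1P_psd.conjTranspose_mul_mul_same U
        rwa [conjTranspose_eq_transpose_of_trivial] at this
      have heq : Uᵀ * (1 - P) * U = 1 - Uᵀ * P * U := by
        rw [Matrix.mul_sub, Matrix.mul_one, Matrix.sub_mul, hU]
      rw [heq] at hpsd1
      have := psd_diag_nonneg hpsd1 i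
      simp only [Matrix.sub_apply, Matrix.one_apply_eq] at this
      linarith
    have hcs : ∑ i, (Uᵀ * P * U) i i ≤ (m : ℝ) := by
      have h4 : ∑ i, (Uᵀ * P * U) i i = (Uᵀ * P * U).trace := rfl
      rw [h4, Matrix.trace_mul_cycle, ← Matrix.mul_assoc, hUU, Matrix.one_mul]
      exact htrP
    have hwanti : Antitone (fun i => ν i * ν i) := fun i j hij =>
      mul_le_mul (hνanti hij) (hνanti hij) (hν0 j) (hν0 i)
    calc ∑ i, (Uᵀ * P * U) i i * (ν i * ν i)
        = ∑ i, (ν i * ν i) * (Uᵀ * P * U) i i := by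
          exact Finset.sum_congr rfl fun i _ => mul_comm _ _
      _ ≤ _ := bathtub _ _ hwanti (fun i => mul_self_nonneg _) hc0 hc1 hcs
  -- assemble the key bound : 2 tr(Ap Z) - tr(Z Z) ≤ ∑_{i<m} ν i ^2
  have hApZexp : ∑ i, ∑ j, ((Ap - Z) i j) ^ 2
      = (Ap * Ap).trace - 2 * (Ap * Z).trace + (Z * Z).trace := sumsq_sub_expand hApt hZt
  have key : 2 * (Ap * Z).trace - (Z * Z).trace
      ≤ ∑ i : Fin d, (if (i : ℕ) < m then ν i * ν i else 0) := by
    have h1 : (Mᵀ * M).trace ≥ (((1 - P) * M)ᵀ * ((1 - P) * M)).trace := by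
      rw [pythag]; linarith
    rw [h1PM, step4] at h1
    have h2 : (Mᵀ * M).trace = ∑ i, ∑ j, ((Ap - Z) i j) ^ 2 := by
      rw [sum_sq_eq_trace]
    rw [h2, hApZexp] at h1
    have := step5
    linarith
  -- pointwise identities
  have hpoint : ∀ i, ν i * (ν i - lam i) = 0 := by
    intro i
    rcases le_or_gt (lam i) 0 with h | h
    · simp [hνdef, max_eq_right h]
    · simp [hνdef, max_eq_left h.le]
  have hsum1 : ∑ i, (lam i - b i) ^ 2
      = ∑ i, (lam i - ν i) ^ 2 + ∑ i : Fin d, (if (i : ℕ) < m then 0 else ν i * ν i) := by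
    rw [← Finset.sum_add_distrib]
    refine Finset.sum_congr rfl fun i _ => ?_
    by_cases h : (i : ℕ) < m
    · simp only [hbdef, h, if_true]; ring
    · simp only [hbdef, h, if_false]
      have := hpoint i
      nlinarith [hpoint i]
  have hsum2 : ∑ i, (lam i) ^ 2 = ∑ i, (lam i - ν i) ^ 2 + ∑ i, ν i * ν i := by
    rw [← Finset.sum_add_distrib]
    refine Finset.sum_congr rfl fun i _ => ?_
    nlinarith [hpoint i]
  have hsum3 : ∑ i, ν i * ν i
      = (∑ i : Fin d, (if (i : ℕ) < m then ν i * ν i else 0))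
        + ∑ i : Fin d, (if (i : ℕ) < m then 0 else ν i * ν i) := by
    rw [← Finset.sum_add_distrib]
    refine Finset.sum_congr rfl fun i _ => ?_
    by_cases h : (i : ℕ) < m <;> simp [h]
  -- final assembly
  rw [hLHS, hRHS, htrAA]
  linarith [hAZ_le, key, hsum1, hsum2, hsum3]
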